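/- Let x_i < x_{i+1} be real numbers and let σ : ℝ → ℝ be Lipschitz continuous with σ(x_i) = 0, σ(x_{i+1}) = 0, and σ(t) ≠ 0 for all t ∈ (x_i, x_{i+1}). Fix a ∈ (x_i, x_{i+1}). Then H_i(x) = ∫_a^x dt/σ(t) is well defined and strictly monotone on (x_i, x_{i+1}) and is a bijection from the open interval (x_i, x_{i+1}) onto ℝ. -/

import Mathlib

open MeasureTheory Set intervalIntegral

lemma fp_aux_pos (σ : ℝ → ℝ) (L : NNReal) (hσ : LipschitzWith L σ)
    (xi xj : ℝ) (hij : xi < xj)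
    (hzi : σ xi = 0) (hzj : σ xj = 0)
    (hpos : ∀ t ∈ Ioo xi xj, 0 < σ t)
    (a : ℝ) (ha : a ∈ Ioo xi xj) :
    (∀ x ∈ Ioo xi xj, IntervalIntegrable (fun t => 1 / σ t) volume a x) ∧
    StrictMonoOn (fun x => ∫ t in a..x, 1 / σ t) (Ioo xi xj) ∧
    BijOn (fun x => ∫ t in a..x, 1 / σ t) (Ioo xi xj) univ := by
  have hσc : Continuous σ := hσ.continuous
  -- L > 0
  have hL : 0 < (L : ℝ) := by
    by_contra h
    have hL0 : (L : ℝ) = 0 := le_antisymm (not_lt.1 h) L.coe_nonneg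
    have h1 := hσ.dist_le_mul a xi
    rw [hL0, zero_mul] at h1
    have h2 : σ a = 0 := by
      have := le_antisymm h1 dist_nonneg
      simpa [Real.dist_eq, hzi, abs_eq_zero, sub_eq_zero] using this
    exact (hpos a ha).ne' h2
  have hsub : ∀ x ∈ Ioo xi xj, ∀ y ∈ Ioo xi xj, uIcc x y ⊆ Ioo xi xj := fun x hx y hy =>
    (Set.ordConnected_Ioo).uIcc_subset hx hy
  have hInt : ∀ x ∈ Ioo xi xj, ∀ y ∈ Ioo xi xj,
      IntervalIntegrable (fun t => 1 / σ t) volume x y := by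
    intro x hx y hy
    apply ContinuousOn.intervalIntegrable
    apply continuousOn_const.div hσc.continuousOn
    exact fun t ht => (hpos t (hsub x hx y hy ht)).ne'
  set H : ℝ → ℝ := fun x => ∫ t in a..x, 1 / σ t with hH
  -- strict monotonicity
  have hmono : StrictMonoOn H (Ioo xi xj) := by
    intro x hx y hy hxy
    have hadd : H x + ∫ t in x..y, 1 / σ t = H y :=
      integral_add_adjacent_intervals (hInt a ha x hx) (hInt x hx y hy)
    have hposInt : 0 < ∫ t in x..y, 1 / σ t := by
      apply intervalIntegral_pos_of_pos_on (hInt x hx y hy) _ hxy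
      intro t ht
      have : t ∈ Ioo xi xj := ⟨hx.1.trans ht.1, ht.2.trans hy.2⟩
      exact one_div_pos.mpr (hpos t this)
    linarith
  -- pointwise bounds from Lipschitz
  have hub : ∀ t ∈ Ioo xi xj, σ t ≤ (L : ℝ) * (xj - t) := by
    intro t ht
    have := hσ.dist_le_mul t xj
    rw [Real.dist_eq, Real.dist_eq, hzj, sub_zero, abs_of_neg (sub_neg.2 ht.2),
      neg_sub] at this
    exact (le_abs_self _).trans this
  have hub' : ∀ t ∈ Ioo xi xj, σ t ≤ (L : ℝ) * (t - xi) := by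
    intro t ht
    have := hσ.dist_le_mul t xi
    rw [Real.dist_eq, Real.dist_eq, hzi, sub_zero, abs_of_pos (sub_pos.2 ht.1)] at this
    exact (le_abs_self _).trans this
  -- lower bound for H to the right of a
  have hright : ∀ x ∈ Ioo xi xj, a ≤ x →
      (L : ℝ)⁻¹ * Real.log ((xj - a) / (xj - x)) ≤ H x := by
    intro x hx hax
    have hxxj : 0 < xj - x := sub_pos.2 hx.2
    have haxj : 0 < xj - a := sub_pos.2 ha.2
    have hg : IntervalIntegrable (fun t => ((L : ℝ) * (xj - t))⁻¹) volume a x := by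
      apply ContinuousOn.intervalIntegrable
      apply ((continuous_const.mul (continuous_const.sub continuous_id)).continuousOn).inv₀
      intro t ht
      have ht' := hsub a ha x hx ht
      have : 0 < (L : ℝ) * (xj - t) := mul_pos hL (sub_pos.2 ht'.2)
      exact this.ne'
    have hmon : (∫ t in a..x, ((L : ℝ) * (xj - t))⁻¹) ≤ H x := by
      apply integral_mono_on hax hg (hInt a ha x hx)
      intro t ht
      have ht' : t ∈ Ioo xi xj := ⟨lt_of_lt_of_le ha.1 ht.1, lt_of_le_of_lt ht.2 hx.2⟩
      rw [one_div]
      exact inv_anti₀ (hpos t ht') (hub t ht')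
    have hcomp : (∫ t in a..x, ((L : ℝ) * (xj - t))⁻¹)
        = (L : ℝ)⁻¹ * Real.log ((xj - a) / (xj - x)) := by
      have h1 : (∫ t in a..x, ((L : ℝ) * (xj - t))⁻¹)
          = (L : ℝ)⁻¹ * ∫ t in a..x, (xj - t)⁻¹ := by
        simp_rw [mul_inv]
        exact integral_const_mul _ _
      have h2 : (∫ t in a..x, (xj - t)⁻¹) = ∫ u in xj - x..xj - a, u⁻¹ :=
        integral_comp_sub_left (fun u => u⁻¹) xj
      rw [h1, h2, integral_inv_of_pos hxxj haxj]
    linarith [hcomp ▸ hmon]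
  -- upper bound for H to the left of a
  have hleft : ∀ x ∈ Ioo xi xj, x ≤ a →
      H x ≤ -((L : ℝ)⁻¹ * Real.log ((a - xi) / (x - xi))) := by
    intro x hx hxa
    have hxxi : 0 < x - xi := sub_pos.2 hx.1
    have haxi : 0 < a - xi := sub_pos.2 ha.1
    have hg : IntervalIntegrable (fun t => ((L : ℝ) * (t - xi))⁻¹) volume x a := by
      apply ContinuousOn.intervalIntegrable
      apply ((continuous_const.mul (continuous_id.sub continuous_const)).continuousOn).inv₀
      intro t ht
      have ht' := hsub x hx a ha ht
      have : 0 < (L : ℝ) * (t - xi) := mul_pos hL (sub_pos.2 ht'.1)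
      exact this.ne'
    have hmon : (∫ t in x..a, ((L : ℝ) * (t - xi))⁻¹) ≤ ∫ t in x..a, 1 / σ t := by
      apply integral_mono_on hxa hg (hInt x hx a ha)
      intro t ht
      have ht' : t ∈ Ioo xi xj := ⟨lt_of_lt_of_le hx.1 ht.1, lt_of_le_of_lt ht.2 ha.2⟩
      rw [one_div]
      exact inv_anti₀ (hpos t ht') (hub' t ht')
    have hVal : H x = -∫ t in x..a, 1 / σ t := integral_symm x a
    have hcomp : (∫ t in x..a, ((L : ℝ) * (t - xi))⁻¹)
        = (L : ℝ)⁻¹ * Real.log ((a - xi) / (x - xi)) := by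
      have h1 : (∫ t in x..a, ((L : ℝ) * (t - xi))⁻¹)
          = (L : ℝ)⁻¹ * ∫ t in x..a, (t - xi)⁻¹ := by
        simp_rw [mul_inv]
        exact integral_const_mul _ _
      have h2 : (∫ t in x..a, (t - xi)⁻¹) = ∫ u in x - xi..a - xi, u⁻¹ :=
        integral_comp_sub_right (fun u => u⁻¹) xi
      rw [h1, h2, integral_inv_of_pos hxxi haxi]
    rw [hVal]
    linarith [hcomp ▸ hmon]
  refine ⟨fun x hx => hInt a ha x hx, hmono, mapsTo_univ _ _, hmono.injOn, fun y _ => ?_⟩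
  -- surjectivity
  -- find x2 with H x2 ≥ y
  obtain ⟨x2, hx2, hx2y⟩ : ∃ x2 ∈ Ioo xi xj, a ≤ x2 ∧ y ≤ H x2 := by
    set ε : ℝ := (xj - a) * min (Real.exp (-((L : ℝ) * y))) 1 with hε
    have hεpos : 0 < ε := mul_pos (sub_pos.2 ha.2) (lt_min (Real.exp_pos _) one_pos)
    have hεle : ε ≤ xj - a := by
      nlinarith [min_le_right (Real.exp (-((L : ℝ) * y))) 1, sub_pos.2 ha.2]
    refine ⟨xj - ε, ⟨by linarith [ha.1], by linarith⟩, by linarith, ?_⟩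
    have hxmem : xj - ε ∈ Ioo xi xj := ⟨by linarith [ha.1], by linarith⟩
    have hb := hright (xj - ε) hxmem (by linarith)
    have hlog : (L : ℝ) * y ≤ Real.log ((xj - a) / (xj - (xj - ε))) := by
      have h1 : (xj - a) / (xj - (xj - ε)) = (min (Real.exp (-((L : ℝ) * y))) 1)⁻¹ := by
        field_simp [hε]
        rw [show xj - (xj - ε) = ε by ring, ← hε, div_self hεpos.ne']
      rw [h1, Real.log_inv]
      have h2 : Real.log (min (Real.exp (-((L : ℝ) * y))) 1) ≤ -((L : ℝ) * y) := by
        calc Real.log (min (Real.exp (-((L : ℝ) * y))) 1)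
            ≤ Real.log (Real.exp (-((L : ℝ) * y))) :=
              Real.log_le_log (lt_min (Real.exp_pos _) one_pos)
                (min_le_left _ _)
          _ = -((L : ℝ) * y) := Real.log_exp _
      linarith
    calc y = (L : ℝ)⁻¹ * ((L : ℝ) * y) := by field_simp
      _ ≤ (L : ℝ)⁻¹ * Real.log ((xj - a) / (xj - (xj - ε))) := by
          apply mul_le_mul_of_nonneg_left hlog (inv_nonneg.2 hL.le)
      _ ≤ H (xj - ε) := hb
  obtain ⟨hx2a, hx2y⟩ := hx2y
  -- find x1 with H x1 ≤ y
  obtain ⟨x1, hx1, hx1a, hx1y⟩ : ∃ x1 ∈ Ioo xi xj, x1 ≤ a ∧ H x1 ≤ y := by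
    set δ : ℝ := (a - xi) * min (Real.exp ((L : ℝ) * y)) 1 with hδ
    have hδpos : 0 < δ := mul_pos (sub_pos.2 ha.1) (lt_min (Real.exp_pos _) one_pos)
    have hδle : δ ≤ a - xi := by
      nlinarith [min_le_right (Real.exp ((L : ℝ) * y)) 1, sub_pos.2 ha.1]
    refine ⟨xi + δ, ⟨by linarith, by linarith [ha.2]⟩, by linarith, ?_⟩
    have hxmem : xi + δ ∈ Ioo xi xj := ⟨by linarith, by linarith [ha.2]⟩
    have hb := hleft (xi + δ) hxmem (by linarith)
    have hlog : -((L : ℝ) * y) ≤ Real.log ((a - xi) / (xi + δ - xi)) := by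
      have h1 : (a - xi) / (xi + δ - xi) = (min (Real.exp ((L : ℝ) * y)) 1)⁻¹ := by
        field_simp [hδ]
        rw [show xi + δ - xi = δ by ring, ← hδ, div_self hδpos.ne']
      rw [h1, Real.log_inv]
      have h2 : Real.log (min (Real.exp ((L : ℝ) * y)) 1) ≤ (L : ℝ) * y := by
        calc Real.log (min (Real.exp ((L : ℝ) * y)) 1)
            ≤ Real.log (Real.exp ((L : ℝ) * y)) :=
              Real.log_le_log (lt_min (Real.exp_pos _) one_pos) (min_le_left _ _)
          _ = (L : ℝ) * y := Real.log_exp _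
      linarith
    have : -((L : ℝ)⁻¹ * Real.log ((a - xi) / (xi + δ - xi))) ≤ y := by
      have := mul_le_mul_of_nonneg_left hlog (inv_nonneg.2 hL.le)
      have hLy : (L : ℝ)⁻¹ * ((L : ℝ) * y) = y := by field_simp
      nlinarith [this]
    linarith [hb]
  -- IVT on [x1, x2]
  have hx12 : x1 ≤ x2 := hx1a.trans hx2a
  have hIcc : Icc x1 x2 ⊆ Ioo xi xj := fun t ht => ⟨lt_of_lt_of_le hx1.1 ht.1,
    lt_of_le_of_lt ht.2 hx2.2⟩
  have hcont : ContinuousOn H (Icc x1 x2) := by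
    have hu : Icc x1 x2 = uIcc x1 x2 := (uIcc_of_le hx12).symm
    rw [hu]
    apply continuousOn_primitive_interval' (hInt x1 hx1 x2 hx2)
    rw [← hu]
    exact ⟨hx1a, hx2a⟩
  have := intermediate_value_Icc hx12 hcont
  obtain ⟨c, hc, hcy⟩ := this ⟨hx1y, hx2y⟩
  exact ⟨c, hIcc hc, hcy⟩

/-- Between two consecutive zeros x_i < x_{i+1} of a Lipschitz σ,
H_i(x) = ∫_a^x dt/σ(t) is well defined and strictly monotone on (x_i, x_{i+1})
and is a bijection from (x_i, x_{i+1}) onto ℝ. -/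
theorem fokker_planck_Hi_bijection_interval
    (σ : ℝ → ℝ) (L : NNReal) (hσ : LipschitzWith L σ)
    (xi xj : ℝ) (hij : xi < xj)
    (hzi : σ xi = 0) (hzj : σ xj = 0)
    (hne : ∀ t ∈ Ioo xi xj, σ t ≠ 0)
    (a : ℝ) (ha : a ∈ Ioo xi xj) :
    (∀ x ∈ Ioo xi xj, IntervalIntegrable (fun t => 1 / σ t) volume a x) ∧
    (StrictMonoOn (fun x => ∫ t in a..x, 1 / σ t) (Ioo xi xj) ∨
     StrictAntiOn (fun x => ∫ t in a..x, 1 / σ t) (Ioo xi xj)) ∧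
    BijOn (fun x => ∫ t in a..x, 1 / σ t) (Ioo xi xj) univ := by
  have hσc : Continuous σ := hσ.continuous
  -- σ has constant sign on the open interval
  have hsign : (∀ t ∈ Ioo xi xj, 0 < σ t) ∨ (∀ t ∈ Ioo xi xj, σ t < 0) := by
    rcases (hne a ha).lt_or_gt with hneg | hpos
    · right
      intro t ht
      by_contra h
      have ht0 : 0 < σ t := (hne t ht).lt_or_gt.resolve_left h
      have h0 : (0 : ℝ) ∈ uIcc (σ t) (σ a) := by
        rw [mem_uIcc]; right; exact ⟨hneg.le, ht0.le⟩
      obtain ⟨c, hc, hc0⟩ := intermediate_value_uIcc (hσc.continuousOn) h0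
      exact hne c ((Set.ordConnected_Ioo).uIcc_subset ht ha hc) hc0
    · left
      intro t ht
      by_contra h
      have ht0 : σ t < 0 := (hne t ht).lt_or_gt.resolve_right h
      have h0 : (0 : ℝ) ∈ uIcc (σ t) (σ a) := by
        rw [mem_uIcc]; left; exact ⟨ht0.le, hpos.le⟩
      obtain ⟨c, hc, hc0⟩ := intermediate_value_uIcc (hσc.continuousOn) h0
      exact hne c ((Set.ordConnected_Ioo).uIcc_subset ht ha hc) hc0
  rcases hsign with hpos | hneg
  · obtain ⟨hI, hM, hB⟩ := fp_aux_pos σ L hσ xi xj hij hzi hzj hpos a ha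
    exact ⟨hI, Or.inl hM, hB⟩
  · obtain ⟨hI, hM, hB⟩ := fp_aux_pos (fun t => -σ t) L (by exact hσ.neg)
      xi xj hij (by simp [hzi]) (by simp [hzj])
      (fun t ht => by simpa using hneg t ht) a ha
    have hHG : ∀ x, (∫ t in a..x, 1 / σ t) = -∫ t in a..x, 1 / (-σ t) := by
      intro x
      rw [← intervalIntegral.integral_neg]
      congr 1
      funext t
      field_simp
    refine ⟨?_, Or.inr ?_, ?_⟩
    · intro x hx
      have := (hI x hx).neg
      simpa [one_div, Pi.neg_def, inv_neg] using this
    · intro x hx y hy hxy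
      simp only [hHG]
      exact neg_lt_neg (hM hx hy hxy)
    · have hBneg : BijOn (fun y : ℝ => -y) univ univ :=
        ⟨mapsTo_univ _ _, neg_injective.injOn, fun y _ => ⟨-y, trivial, neg_neg y⟩⟩
      have := hBneg.comp hB
      exact this.congr (fun x _ => (hHG x).symm)
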